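/- Let {ξ_k}_{k≥0} and {η_k}_{k≥0} be strictly increasing sequences of positive real numbers, and let a, b > 0 satisfy a·η₀ = b·ξ₀. Define weights α(k) := ξ_{k₁} if k₁ ≥ 1 or k₂ ≥ 1, α(0,0) := a; β(k) := η_{k₂} if k₁ ≥ 1 or k₂ ≥ 1, β(0,0) := b. Then the six-point-test matrix M(k) is positive semidefinite for every k ∈ ℤ₊² if and only if a ≤ h, where h := ξ₀ √( (ξ₁²η₁² − ξ₀²η₀²) / (ξ₀²η₁² + ξ₁²η₀² − 2ξ₀²η₀²) ). -/

import Mathlib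

open MeasureTheory

/-- The 2×2 matrix of the Six-point Test at base point `k` for a 2-variable
weighted shift with weight families `α`, `β`. -/
def sixPointMatrix (α β : ℕ × ℕ → ℝ) (k : ℕ × ℕ) : Matrix (Fin 2) (Fin 2) ℝ :=
  !![α (k.1 + 1, k.2) ^ 2 - α k ^ 2,
     α (k.1, k.2 + 1) * β (k.1 + 1, k.2) - α k * β k;
     α (k.1, k.2 + 1) * β (k.1 + 1, k.2) - α k * β k,
     β (k.1, k.2 + 1) ^ 2 - β k ^ 2]

lemma quad_form_eval (p q r : ℝ) (s t : ℝ) :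
    dotProduct (star ![s, t]) ((!![p, q; q, r] : Matrix (Fin 2) (Fin 2) ℝ).mulVec ![s, t])
      = p * s ^ 2 + 2 * q * (s * t) + r * t ^ 2 := by
  simp [dotProduct, Matrix.mulVec, Fin.sum_univ_two]
  ring

lemma psd_two (p q r : ℝ) (hp : 0 ≤ p) (hr : 0 ≤ r) (hq : q ^ 2 ≤ p * r) :
    (!![p, q; q, r] : Matrix (Fin 2) (Fin 2) ℝ).PosSemidef := by
  rw [Matrix.posSemidef_iff_dotProduct_mulVec]
  constructor
  · ext i j
    fin_cases i <;> fin_cases j <;> simp [Matrix.conjTranspose_apply]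
  · intro x
    have hx : x = ![x 0, x 1] := by
      ext i; fin_cases i <;> rfl
    rw [hx, quad_form_eval]
    rcases eq_or_lt_of_le hp with h0 | h0
    · have hq0 : q = 0 := by nlinarith [sq_nonneg q]
      rw [← h0, hq0]
      nlinarith [sq_nonneg (x 1)]
    · nlinarith [sq_nonneg (p * x 0 + q * x 1), mul_nonneg (sub_nonneg.2 hq) (sq_nonneg (x 1))]

lemma psd_det (p q r : ℝ)
    (h : (!![p, q; q, r] : Matrix (Fin 2) (Fin 2) ℝ).PosSemidef) : q ^ 2 ≤ p * r := by
  have key : ∀ s t : ℝ, 0 ≤ p * s ^ 2 + 2 * q * (s * t) + r * t ^ 2 := by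
    intro s t
    have h2 := h.dotProduct_mulVec_nonneg ![s, t]
    rwa [quad_form_eval] at h2
  have hp : 0 ≤ p := by nlinarith [key 1 0]
  rcases eq_or_lt_of_le hp with h0 | h0
  · have hq0 : q = 0 := by
      by_contra hq
      have h5 := key (-(r + 1) / (2 * q)) 1
      rw [← h0] at h5
      field_simp at h5
      have hq2 : 0 < q ^ 2 := lt_of_le_of_ne (sq_nonneg q) (Ne.symm (pow_ne_zero 2 hq))
      rw [le_div_iff₀ hq2] at h5
      nlinarith [h5, sq_nonneg q]
    rw [hq0, ← h0]
    nlinarith [key 0 1]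
  · nlinarith [key q (-p), h0]

set_option maxHeartbeats 1600000 in
/-- Joint hyponormality of the first family of 2-variable weighted shifts is
equivalent to `a ≤ h`. -/
theorem stmt3 (ξ η : ℕ → ℝ) (hξpos : ∀ n, 0 < ξ n) (hηpos : ∀ n, 0 < η n)
    (hξmono : StrictMono ξ) (hηmono : StrictMono η)
    (a b : ℝ) (ha : 0 < a) (hb : 0 < b) (hcomm : a * η 0 = b * ξ 0)
    (α β : ℕ × ℕ → ℝ)
    (hα : ∀ k : ℕ × ℕ, α k = if k = (0, 0) then a else ξ k.1)
    (hβ : ∀ k : ℕ × ℕ, β k = if k = (0, 0) then b else η k.2) :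
    (∀ k : ℕ × ℕ, (sixPointMatrix α β k).PosSemidef) ↔
      a ≤ ξ 0 * Real.sqrt ((ξ 1 ^ 2 * η 1 ^ 2 - ξ 0 ^ 2 * η 0 ^ 2) /
        (ξ 0 ^ 2 * η 1 ^ 2 + ξ 1 ^ 2 * η 0 ^ 2 - 2 * ξ 0 ^ 2 * η 0 ^ 2)) := by
  have hξ01 : ξ 0 < ξ 1 := hξmono (by norm_num)
  have hη01 : η 0 < η 1 := hηmono (by norm_num)
  have hξ0 := hξpos 0
  have hξ1 := hξpos 1
  have hη0 := hηpos 0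
  have hη1 := hηpos 1
  have hx2 : ξ 0 ^ 2 < ξ 1 ^ 2 := by nlinarith
  have hy2 : η 0 ^ 2 < η 1 ^ 2 := by nlinarith
  have hD : 0 < ξ 0 ^ 2 * η 1 ^ 2 + ξ 1 ^ 2 * η 0 ^ 2 - 2 * ξ 0 ^ 2 * η 0 ^ 2 := by
    nlinarith [mul_pos (pow_pos hξ0 2) (sub_pos.2 hy2), mul_pos (pow_pos hη0 2) (sub_pos.2 hx2)]
  have hN : 0 < ξ 1 ^ 2 * η 1 ^ 2 - ξ 0 ^ 2 * η 0 ^ 2 := by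
    nlinarith [mul_pos (pow_pos hξ1 2) (sub_pos.2 hy2), mul_pos (pow_pos hη0 2) (sub_pos.2 hx2)]
  have hsq : Real.sqrt ((ξ 1 ^ 2 * η 1 ^ 2 - ξ 0 ^ 2 * η 0 ^ 2) /
        (ξ 0 ^ 2 * η 1 ^ 2 + ξ 1 ^ 2 * η 0 ^ 2 - 2 * ξ 0 ^ 2 * η 0 ^ 2)) ^ 2
      = (ξ 1 ^ 2 * η 1 ^ 2 - ξ 0 ^ 2 * η 0 ^ 2) /
        (ξ 0 ^ 2 * η 1 ^ 2 + ξ 1 ^ 2 * η 0 ^ 2 - 2 * ξ 0 ^ 2 * η 0 ^ 2) :=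
    Real.sq_sqrt (le_of_lt (div_pos hN hD))
  have hsqnn : 0 ≤ Real.sqrt ((ξ 1 ^ 2 * η 1 ^ 2 - ξ 0 ^ 2 * η 0 ^ 2) /
        (ξ 0 ^ 2 * η 1 ^ 2 + ξ 1 ^ 2 * η 0 ^ 2 - 2 * ξ 0 ^ 2 * η 0 ^ 2)) := Real.sqrt_nonneg _
  -- the equivalence a ≤ h ↔ a^2 * D ≤ ξ0^2 * N
  have hiff : (a ≤ ξ 0 * Real.sqrt ((ξ 1 ^ 2 * η 1 ^ 2 - ξ 0 ^ 2 * η 0 ^ 2) /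
        (ξ 0 ^ 2 * η 1 ^ 2 + ξ 1 ^ 2 * η 0 ^ 2 - 2 * ξ 0 ^ 2 * η 0 ^ 2))) ↔
      a ^ 2 * (ξ 0 ^ 2 * η 1 ^ 2 + ξ 1 ^ 2 * η 0 ^ 2 - 2 * ξ 0 ^ 2 * η 0 ^ 2) ≤
        ξ 0 ^ 2 * (ξ 1 ^ 2 * η 1 ^ 2 - ξ 0 ^ 2 * η 0 ^ 2) := by
    constructor
    · intro hle
      have h2 : a ^ 2 ≤ ξ 0 ^ 2 * ((ξ 1 ^ 2 * η 1 ^ 2 - ξ 0 ^ 2 * η 0 ^ 2) /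
          (ξ 0 ^ 2 * η 1 ^ 2 + ξ 1 ^ 2 * η 0 ^ 2 - 2 * ξ 0 ^ 2 * η 0 ^ 2)) := by
        rw [← hsq, ← mul_pow]
        nlinarith [mul_nonneg hξ0.le hsqnn]
      have h3 := mul_le_mul_of_nonneg_right h2 hD.le
      have h4 : ξ 0 ^ 2 * ((ξ 1 ^ 2 * η 1 ^ 2 - ξ 0 ^ 2 * η 0 ^ 2) /
            (ξ 0 ^ 2 * η 1 ^ 2 + ξ 1 ^ 2 * η 0 ^ 2 - 2 * ξ 0 ^ 2 * η 0 ^ 2)) *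
            (ξ 0 ^ 2 * η 1 ^ 2 + ξ 1 ^ 2 * η 0 ^ 2 - 2 * ξ 0 ^ 2 * η 0 ^ 2)
          = ξ 0 ^ 2 * (ξ 1 ^ 2 * η 1 ^ 2 - ξ 0 ^ 2 * η 0 ^ 2) := by
        field_simp
        exact div_self (ne_of_gt (by linarith))
      linarith [h3, h4]
    · intro hle
      have h2 : a ^ 2 ≤ (ξ 0 * Real.sqrt ((ξ 1 ^ 2 * η 1 ^ 2 - ξ 0 ^ 2 * η 0 ^ 2) /
          (ξ 0 ^ 2 * η 1 ^ 2 + ξ 1 ^ 2 * η 0 ^ 2 - 2 * ξ 0 ^ 2 * η 0 ^ 2))) ^ 2 := by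
        rw [mul_pow, hsq, ← mul_div_assoc, le_div_iff₀ hD]
        linarith
      nlinarith [mul_nonneg hξ0.le hsqnn]
  rw [hiff]
  -- the six-point matrix at the origin
  have hmat00 : sixPointMatrix α β (0, 0) =
      !![ξ 1 ^ 2 - a ^ 2, ξ 0 * η 0 - a * b;
         ξ 0 * η 0 - a * b, η 1 ^ 2 - b ^ 2] := by
    unfold sixPointMatrix
    rw [hα (0, 0), hα, hα, hβ (0, 0), hβ, hβ]
    norm_num
  -- helper equalities from the commutation relation
  have e1 : ξ 1 ^ 2 * (b * ξ 0) ^ 2 = ξ 1 ^ 2 * (a * η 0) ^ 2 := by rw [hcomm]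
  have e2 : 2 * a * ξ 0 ^ 2 * η 0 * (b * ξ 0) = 2 * a * ξ 0 ^ 2 * η 0 * (a * η 0) := by rw [hcomm]
  constructor
  · -- forward: joint hyponormality implies the bound
    intro H
    have M00 := H (0, 0)
    rw [hmat00] at M00
    have hdet := psd_det _ _ _ M00
    have hdet' : ξ 0 ^ 2 * ((ξ 0 * η 0 - a * b) ^ 2) ≤
        ξ 0 ^ 2 * ((ξ 1 ^ 2 - a ^ 2) * (η 1 ^ 2 - b ^ 2)) :=
      mul_le_mul_of_nonneg_left hdet (sq_nonneg _)
    linarith [hdet', e1, e2]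
  · -- reverse
    intro hle k
    by_cases hk : k = (0, 0)
    · subst hk
      rw [hmat00]
      have hbsq : b ^ 2 * ξ 0 ^ 2 = a ^ 2 * η 0 ^ 2 := by
        have h := congrArg (· ^ 2) hcomm
        simp only [mul_pow] at h
        linarith
      -- a^2 ≤ ξ1^2
      have hNle : ξ 0 ^ 2 * (ξ 1 ^ 2 * η 1 ^ 2 - ξ 0 ^ 2 * η 0 ^ 2) ≤
          ξ 1 ^ 2 * (ξ 0 ^ 2 * η 1 ^ 2 + ξ 1 ^ 2 * η 0 ^ 2 - 2 * ξ 0 ^ 2 * η 0 ^ 2) := by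
        linarith [sq_nonneg (η 0 * (ξ 1 ^ 2 - ξ 0 ^ 2))]
      have hpdiag : 0 ≤ ξ 1 ^ 2 - a ^ 2 := by
        have h3 : a ^ 2 * (ξ 0 ^ 2 * η 1 ^ 2 + ξ 1 ^ 2 * η 0 ^ 2 - 2 * ξ 0 ^ 2 * η 0 ^ 2) ≤
            ξ 1 ^ 2 * (ξ 0 ^ 2 * η 1 ^ 2 + ξ 1 ^ 2 * η 0 ^ 2 - 2 * ξ 0 ^ 2 * η 0 ^ 2) :=
          le_trans hle hNle
        have h4 := le_of_mul_le_mul_right h3 hD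
        linarith
      -- b^2 ≤ η1^2
      have hNle2 : ξ 0 ^ 2 * η 0 ^ 2 * (ξ 1 ^ 2 * η 1 ^ 2 - ξ 0 ^ 2 * η 0 ^ 2) ≤
          ξ 0 ^ 2 * η 1 ^ 2 * (ξ 0 ^ 2 * η 1 ^ 2 + ξ 1 ^ 2 * η 0 ^ 2 - 2 * ξ 0 ^ 2 * η 0 ^ 2) := by
        linarith [sq_nonneg (ξ 0 ^ 2 * (η 1 ^ 2 - η 0 ^ 2))]
      have hrdiag : 0 ≤ η 1 ^ 2 - b ^ 2 := by
        have hle2 := mul_le_mul_of_nonneg_right hle (sq_nonneg (η 0))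
        have hbsqD := congrArg
          (· * (ξ 0 ^ 2 * η 1 ^ 2 + ξ 1 ^ 2 * η 0 ^ 2 - 2 * ξ 0 ^ 2 * η 0 ^ 2)) hbsq
        have h3 : b ^ 2 * (ξ 0 ^ 2 *
              (ξ 0 ^ 2 * η 1 ^ 2 + ξ 1 ^ 2 * η 0 ^ 2 - 2 * ξ 0 ^ 2 * η 0 ^ 2)) ≤
            η 1 ^ 2 * (ξ 0 ^ 2 *
              (ξ 0 ^ 2 * η 1 ^ 2 + ξ 1 ^ 2 * η 0 ^ 2 - 2 * ξ 0 ^ 2 * η 0 ^ 2)) := by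
          linarith [hle2, hbsqD, hNle2]
        have h4 := le_of_mul_le_mul_right h3 (by positivity)
        linarith
      -- determinant condition
      have hdet : (ξ 0 * η 0 - a * b) ^ 2 ≤ (ξ 1 ^ 2 - a ^ 2) * (η 1 ^ 2 - b ^ 2) := by
        have hkey : ξ 0 ^ 2 * ((ξ 0 * η 0 - a * b) ^ 2) ≤
            ξ 0 ^ 2 * ((ξ 1 ^ 2 - a ^ 2) * (η 1 ^ 2 - b ^ 2)) := by
          linarith [hle, e1, e2]
        exact le_of_mul_le_mul_left hkey (by positivity)
      exact psd_two _ _ _ hpdiag hrdiag hdet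
    · -- off-origin points: the matrix is diagonal with nonneg entries
      have hne1 : ((k.1 + 1, k.2) : ℕ × ℕ) ≠ (0, 0) := by simp [Prod.ext_iff]
      have hne2 : ((k.1, k.2 + 1) : ℕ × ℕ) ≠ (0, 0) := by simp [Prod.ext_iff]
      have h1 : α (k.1 + 1, k.2) = ξ (k.1 + 1) := by rw [hα, if_neg hne1]
      have h2 : α (k.1, k.2 + 1) = ξ k.1 := by rw [hα, if_neg hne2]
      have h3 : α k = ξ k.1 := by rw [hα, if_neg hk]
      have h4 : β (k.1 + 1, k.2) = η k.2 := by rw [hβ, if_neg hne1]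
      have h5 : β (k.1, k.2 + 1) = η (k.2 + 1) := by rw [hβ, if_neg hne2]
      have h6 : β k = η k.2 := by rw [hβ, if_neg hk]
      have hmat : sixPointMatrix α β k =
          !![ξ (k.1 + 1) ^ 2 - ξ k.1 ^ 2, ξ k.1 * η k.2 - ξ k.1 * η k.2;
             ξ k.1 * η k.2 - ξ k.1 * η k.2, η (k.2 + 1) ^ 2 - η k.2 ^ 2] := by
        unfold sixPointMatrix
        rw [h1, h2, h3, h4, h5, h6]
      rw [hmat]
      have hp : 0 ≤ ξ (k.1 + 1) ^ 2 - ξ k.1 ^ 2 := by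
        nlinarith [hξpos k.1, hξmono (lt_add_one k.1)]
      have hr : 0 ≤ η (k.2 + 1) ^ 2 - η k.2 ^ 2 := by
        nlinarith [hηpos k.2, hηmono (lt_add_one k.2)]
      have hq : (ξ k.1 * η k.2 - ξ k.1 * η k.2) ^ 2 ≤
          (ξ (k.1 + 1) ^ 2 - ξ k.1 ^ 2) * (η (k.2 + 1) ^ 2 - η k.2 ^ 2) := by
        rw [sub_self]
        simpa using mul_nonneg hp hr
      exact psd_two _ _ _ hp hr hq
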